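/- The class of cographs is closed under Seidel minors: if G is a cograph and H is a Seidel minor of G, then H is a cograph. -/

import Mathlib

universe u

/-- The Seidel complement of `G` at `v`: adjacency between the open neighborhood of `v`
and the set of vertices different from `v` and not adjacent to `v` is complemented,
all other adjacencies are unchanged. -/
def seidelCompl {V : Type u} (G : SimpleGraph V) (v : V) : SimpleGraph V where
  Adj x y := x ≠ y ∧
    Xor' (G.Adj x y)
      ((G.Adj v x ∧ ¬ G.Adj v y ∧ y ≠ v) ∨ (G.Adj v y ∧ ¬ G.Adj v x ∧ x ≠ v))
  symm := ⟨by
    rintro x y ⟨hxy, h⟩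
    refine ⟨hxy.symm, ?_⟩
    have h1 : G.Adj x y ↔ G.Adj y x := G.adj_comm x y
    unfold Xor' Xor at h ⊢
    tauto⟩
  loopless := ⟨fun x h => h.1 rfl⟩

/-- A cograph: a graph with no induced subgraph isomorphic to `P₄`,
the path on four vertices. -/
def IsCograph {V : Type u} (G : SimpleGraph V) : Prop :=
  IsEmpty (SimpleGraph.pathGraph 4 ↪g G)

/-- `SeidelMinor H G` : a graph isomorphic to `H` can be obtained from `G` by a finite
sequence of Seidel complementations and vertex deletions. -/
inductive SeidelMinor : ∀ {U V : Type u}, SimpleGraph U → SimpleGraph V → Prop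
  | iso {U V : Type u} {H : SimpleGraph U} {G : SimpleGraph V} (e : H ≃g G) :
      SeidelMinor H G
  | seidel {U V : Type u} {H : SimpleGraph U} {G : SimpleGraph V} (v : V)
      (h : SeidelMinor H (seidelCompl G v)) : SeidelMinor H G
  | delete {U V : Type u} {H : SimpleGraph U} {G : SimpleGraph V} (v : V)
      (h : SeidelMinor H (G.induce {u : V | u ≠ v})) : SeidelMinor H G

section Aux

theorem seidelCompl_adj {V : Type u} (G : SimpleGraph V) (v x y : V) :
    (seidelCompl G v).Adj x y ↔ x ≠ y ∧
      Xor' (G.Adj x y)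
        ((G.Adj v x ∧ ¬ G.Adj v y ∧ y ≠ v) ∨ (G.Adj v y ∧ ¬ G.Adj v x ∧ x ≠ v)) :=
  Iff.rfl

def idx5 (x y : Fin 5) : Fin 10 :=
  ⟨(max x.val y.val * (max x.val y.val - 1) / 2 + min x.val y.val) % 10,
    Nat.mod_lt _ (by norm_num)⟩

def madj5 (b : Fin 10 → Bool) (x y : Fin 5) : Prop := x ≠ y ∧ b (idx5 x y) = true

def sadj5 (b : Fin 10 → Bool) (x y : Fin 5) : Prop := x ≠ y ∧
  Xor' (madj5 b x y)
    ((madj5 b 0 x ∧ ¬ madj5 b 0 y ∧ y ≠ 0) ∨ (madj5 b 0 y ∧ ¬ madj5 b 0 x ∧ x ≠ 0))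

instance {b} : DecidableRel (madj5 b) := fun x y => by unfold madj5; infer_instance
instance {b} : DecidableRel (sadj5 b) := fun x y => by unfold sadj5 Xor'; infer_instance

theorem idx5_inj : ∀ x y x' y' : Fin 5, x ≠ y → x' ≠ y' → idx5 x y = idx5 x' y' →
    (x = x' ∧ y = y') ∨ (x = y' ∧ y = x') := by decide

set_option maxRecDepth 100000 in
set_option maxHeartbeats 1000000 in
set_option synthInstance.maxHeartbeats 400000 in
set_option synthInstance.maxSize 1000000 in
theorem keyA : ∀ b0 b1 b2 b3 b4 b5 b6 b7 b8 b9 : Bool,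
    (sadj5 ![b0,b1,b2,b3,b4,b5,b6,b7,b8,b9] 1 2 ∧ sadj5 ![b0,b1,b2,b3,b4,b5,b6,b7,b8,b9] 2 3 ∧
     sadj5 ![b0,b1,b2,b3,b4,b5,b6,b7,b8,b9] 3 4 ∧ ¬ sadj5 ![b0,b1,b2,b3,b4,b5,b6,b7,b8,b9] 1 3 ∧
     ¬ sadj5 ![b0,b1,b2,b3,b4,b5,b6,b7,b8,b9] 1 4 ∧ ¬ sadj5 ![b0,b1,b2,b3,b4,b5,b6,b7,b8,b9] 2 4) →
    ∃ p q r s : Fin 5,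
      madj5 ![b0,b1,b2,b3,b4,b5,b6,b7,b8,b9] p q ∧ madj5 ![b0,b1,b2,b3,b4,b5,b6,b7,b8,b9] q r ∧
      madj5 ![b0,b1,b2,b3,b4,b5,b6,b7,b8,b9] r s ∧ ¬ madj5 ![b0,b1,b2,b3,b4,b5,b6,b7,b8,b9] p r ∧
      ¬ madj5 ![b0,b1,b2,b3,b4,b5,b6,b7,b8,b9] p s ∧ ¬ madj5 ![b0,b1,b2,b3,b4,b5,b6,b7,b8,b9] q s ∧
      p ≠ r ∧ p ≠ s ∧ q ≠ s := by decide

def idx4 (x y : Fin 4) : Fin 6 :=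
  ⟨(max x.val y.val * (max x.val y.val - 1) / 2 + min x.val y.val) % 6,
    Nat.mod_lt _ (by norm_num)⟩

def madj4 (b : Fin 6 → Bool) (x y : Fin 4) : Prop := x ≠ y ∧ b (idx4 x y) = true

def sadj4 (b : Fin 6 → Bool) (v x y : Fin 4) : Prop := x ≠ y ∧
  Xor' (madj4 b x y)
    ((madj4 b v x ∧ ¬ madj4 b v y ∧ y ≠ v) ∨ (madj4 b v y ∧ ¬ madj4 b v x ∧ x ≠ v))

instance {b} : DecidableRel (madj4 b) := fun x y => by unfold madj4; infer_instance
instance {b v} : DecidableRel (sadj4 b v) := fun x y => by unfold sadj4 Xor'; infer_instance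

theorem idx4_inj : ∀ x y x' y' : Fin 4, x ≠ y → x' ≠ y' → idx4 x y = idx4 x' y' →
    (x = x' ∧ y = y') ∨ (x = y' ∧ y = x') := by decide

set_option maxRecDepth 100000 in
set_option maxHeartbeats 1000000 in
theorem keyB : ∀ b0 b1 b2 b3 b4 b5 : Bool, ∀ v : Fin 4,
    (sadj4 ![b0,b1,b2,b3,b4,b5] v 0 1 ∧ sadj4 ![b0,b1,b2,b3,b4,b5] v 1 2 ∧
     sadj4 ![b0,b1,b2,b3,b4,b5] v 2 3 ∧ ¬ sadj4 ![b0,b1,b2,b3,b4,b5] v 0 2 ∧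
     ¬ sadj4 ![b0,b1,b2,b3,b4,b5] v 0 3 ∧ ¬ sadj4 ![b0,b1,b2,b3,b4,b5] v 1 3) →
    ∃ p q r s : Fin 4,
      madj4 ![b0,b1,b2,b3,b4,b5] p q ∧ madj4 ![b0,b1,b2,b3,b4,b5] q r ∧
      madj4 ![b0,b1,b2,b3,b4,b5] r s ∧ ¬ madj4 ![b0,b1,b2,b3,b4,b5] p r ∧
      ¬ madj4 ![b0,b1,b2,b3,b4,b5] p s ∧ ¬ madj4 ![b0,b1,b2,b3,b4,b5] q s ∧
      p ≠ r ∧ p ≠ s ∧ q ≠ s := by decide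

theorem rep {m p : ℕ} (idx : Fin m → Fin m → Fin p)
    (hinj : ∀ x y x' y' : Fin m, x ≠ y → x' ≠ y' → idx x y = idx x' y' →
      (x = x' ∧ y = y') ∨ (x = y' ∧ y = x'))
    (r : Fin m → Fin m → Prop) (hs : ∀ x y, r x y → r y x) (hi : ∀ x, ¬ r x x) :
    ∃ b : Fin p → Bool, ∀ x y, (x ≠ y ∧ b (idx x y) = true) ↔ r x y := by
  classical
  refine ⟨fun k => if ∃ x y, idx x y = k ∧ r x y then true else false, fun x y => ?_⟩
  constructor
  · rintro ⟨hxy, hb⟩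
    by_cases h : ∃ x' y', idx x' y' = idx x y ∧ r x' y'
    · obtain ⟨x', y', hk, hr⟩ := h
      have hxy' : x' ≠ y' := fun he => hi x' (he ▸ hr)
      rcases hinj x' y' x y hxy' hxy hk with ⟨rfl, rfl⟩ | ⟨rfl, rfl⟩
      · exact hr
      · exact hs _ _ hr
    · simp only [if_neg h] at hb
      exact absurd hb (by simp)
  · intro hr
    have h : ∃ x' y', idx x' y' = idx x y ∧ r x' y' := ⟨x, y, rfl, hr⟩
    exact ⟨fun he => hi x (he ▸ hr), by simp only [if_pos h]⟩

def p4emb {V : Type u} (g : SimpleGraph V) (a b c d : V)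
    (hab : g.Adj a b) (hbc : g.Adj b c) (hcd : g.Adj c d)
    (hac : ¬ g.Adj a c) (had : ¬ g.Adj a d) (hbd : ¬ g.Adj b d)
    (nac : a ≠ c) (nad : a ≠ d) (nbd : b ≠ d) :
    SimpleGraph.pathGraph 4 ↪g g where
  toFun := ![a,b,c,d]
  inj' := by
    have nab := hab.ne
    have nbc := hbc.ne
    have ncd := hcd.ne
    intro i j h
    fin_cases i <;> fin_cases j <;> simp_all [Matrix.cons_val_zero, Matrix.cons_val_one,
      Matrix.head_cons]
  map_rel_iff' := by
    have hba := hab.symm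
    have hcb := hbc.symm
    have hdc := hcd.symm
    have hca : ¬ g.Adj c a := fun h => hac h.symm
    have hda : ¬ g.Adj d a := fun h => had h.symm
    have hdb : ¬ g.Adj d b := fun h => hbd h.symm
    have hl : ∀ x, ¬ g.Adj x x := fun x => g.loopless.irrefl x
    intro i j
    show g.Adj (![a,b,c,d] i) (![a,b,c,d] j) ↔ _
    fin_cases i <;> fin_cases j <;>
      simp_all [SimpleGraph.pathGraph_adj] <;> decide

theorem pathGraph4_adj_01 : (SimpleGraph.pathGraph 4).Adj 0 1 :=
  SimpleGraph.pathGraph_adj.mpr (by decide)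
theorem pathGraph4_adj_12 : (SimpleGraph.pathGraph 4).Adj 1 2 :=
  SimpleGraph.pathGraph_adj.mpr (by decide)
theorem pathGraph4_adj_23 : (SimpleGraph.pathGraph 4).Adj 2 3 :=
  SimpleGraph.pathGraph_adj.mpr (by decide)
theorem pathGraph4_nadj_02 : ¬ (SimpleGraph.pathGraph 4).Adj 0 2 := by
  rw [SimpleGraph.pathGraph_adj]; decide
theorem pathGraph4_nadj_03 : ¬ (SimpleGraph.pathGraph 4).Adj 0 3 := by
  rw [SimpleGraph.pathGraph_adj]; decide
theorem pathGraph4_nadj_13 : ¬ (SimpleGraph.pathGraph 4).Adj 1 3 := by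
  rw [SimpleGraph.pathGraph_adj]; decide

theorem seidelCompl_isCograph {V : Type u} {G : SimpleGraph V} {v : V}
    (hG : IsCograph G) : IsCograph (seidelCompl G v) := by
  constructor
  intro e
  have hP : ∀ i j : Fin 4, (seidelCompl G v).Adj (e i) (e j) ↔
      (SimpleGraph.pathGraph 4).Adj i j := fun i j => e.map_rel_iff
  by_cases hv : ∃ k : Fin 4, e k = v
  · obtain ⟨k, hk⟩ := hv
    obtain ⟨b, hb⟩ := rep idx4 idx4_inj (fun x y => G.Adj (e x) (e y))
      (fun x y h => h.symm) (fun x h => G.loopless.irrefl _ h)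
    have hm : ∀ x y, madj4 b x y ↔ G.Adj (e x) (e y) := hb
    have hs : ∀ x y : Fin 4, sadj4 b k x y ↔ (seidelCompl G v).Adj (e x) (e y) := by
      intro x y
      have h1 := hm x y
      have h2 := hm k x
      have h3 := hm k y
      rw [hk] at h2 h3
      have hxy : x ≠ y ↔ e x ≠ e y :=
        ⟨fun h he => h (e.injective he), fun h he => h (he ▸ rfl)⟩
      have hyk : y ≠ k ↔ (e y : V) ≠ v :=
        ⟨fun h he => h (e.injective (by rw [he, hk])), fun h he => h (by rw [he, hk])⟩
      have hxk : x ≠ k ↔ (e x : V) ≠ v :=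
        ⟨fun h he => h (e.injective (by rw [he, hk])), fun h he => h (by rw [he, hk])⟩
      rw [seidelCompl_adj]
      unfold sadj4
      rw [h1, h2, h3, hxy, hyk, hxk]
    have hbe : ![b 0, b 1, b 2, b 3, b 4, b 5] = b := by
      funext i; fin_cases i <;> rfl
    obtain ⟨p, q, r, s, h1, h2, h3, h4, h5, h6, n1, n2, n3⟩ :=
      keyB (b 0) (b 1) (b 2) (b 3) (b 4) (b 5) k (by
        rw [hbe]
        exact ⟨(hs 0 1).mpr ((hP 0 1).mpr pathGraph4_adj_01),
          (hs 1 2).mpr ((hP 1 2).mpr pathGraph4_adj_12),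
          (hs 2 3).mpr ((hP 2 3).mpr pathGraph4_adj_23),
          fun h => pathGraph4_nadj_02 ((hP 0 2).mp ((hs 0 2).mp h)),
          fun h => pathGraph4_nadj_03 ((hP 0 3).mp ((hs 0 3).mp h)),
          fun h => pathGraph4_nadj_13 ((hP 1 3).mp ((hs 1 3).mp h))⟩)
    rw [hbe] at h1 h2 h3 h4 h5 h6
    exact hG.elim (p4emb G (e p) (e q) (e r) (e s)
      ((hm p q).mp h1) ((hm q r).mp h2) ((hm r s).mp h3)
      (fun h => h4 ((hm p r).mpr h)) (fun h => h5 ((hm p s).mpr h))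
      (fun h => h6 ((hm q s).mpr h))
      (fun h => n1 (e.injective h)) (fun h => n2 (e.injective h))
      (fun h => n3 (e.injective h)))
  · set φ : Fin 5 → V := fun x => Fin.cases v (fun i => e i) x with hφ
    have hφ0 : φ 0 = v := rfl
    have hφs : ∀ i : Fin 4, φ i.succ = e i := fun i => rfl
    have hφinj : Function.Injective φ := by
      intro x y h
      induction x using Fin.cases with
      | zero =>
        induction y using Fin.cases with
        | zero => rfl
        | succ j =>
          rw [hφ0, hφs] at h
          exact absurd ⟨j, h.symm⟩ hv
      | succ i =>
        induction y using Fin.cases with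
        | zero =>
          rw [hφ0, hφs] at h
          exact absurd ⟨i, h⟩ hv
        | succ j =>
          rw [hφs, hφs] at h
          rw [e.injective h]
    obtain ⟨b, hb⟩ := rep idx5 idx5_inj (fun x y => G.Adj (φ x) (φ y))
      (fun x y h => h.symm) (fun x h => G.loopless.irrefl _ h)
    have hm : ∀ x y, madj5 b x y ↔ G.Adj (φ x) (φ y) := hb
    have hs : ∀ x y : Fin 5, sadj5 b x y ↔ (seidelCompl G v).Adj (φ x) (φ y) := by
      intro x y
      have h1 := hm x y
      have h2 := hm 0 x
      have h3 := hm 0 y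
      rw [hφ0] at h2 h3
      have hxy : x ≠ y ↔ φ x ≠ φ y :=
        ⟨fun h he => h (hφinj he), fun h he => h (he ▸ rfl)⟩
      have hyk : y ≠ 0 ↔ φ y ≠ v :=
        ⟨fun h he => h (hφinj (by rw [he, hφ0])), fun h he => h (by rw [he, hφ0])⟩
      have hxk : x ≠ 0 ↔ φ x ≠ v :=
        ⟨fun h he => h (hφinj (by rw [he, hφ0])), fun h he => h (by rw [he, hφ0])⟩
      rw [seidelCompl_adj]
      unfold sadj5
      rw [h1, h2, h3, hxy, hyk, hxk]
    have hφ1 : φ 1 = e 0 := rfl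
    have hφ2 : φ 2 = e 1 := rfl
    have hφ3 : φ 3 = e 2 := rfl
    have hφ4 : φ 4 = e 3 := rfl
    have hbe : ![b 0, b 1, b 2, b 3, b 4, b 5, b 6, b 7, b 8, b 9] = b := by
      funext i; fin_cases i <;> rfl
    obtain ⟨p, q, r, s, h1, h2, h3, h4, h5, h6, n1, n2, n3⟩ :=
      keyA (b 0) (b 1) (b 2) (b 3) (b 4) (b 5) (b 6) (b 7) (b 8) (b 9) (by
        rw [hbe]
        refine ⟨(hs 1 2).mpr ?_, (hs 2 3).mpr ?_, (hs 3 4).mpr ?_,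
          fun h => ?_, fun h => ?_, fun h => ?_⟩
        · rw [hφ1, hφ2]; exact (hP 0 1).mpr pathGraph4_adj_01
        · rw [hφ2, hφ3]; exact (hP 1 2).mpr pathGraph4_adj_12
        · rw [hφ3, hφ4]; exact (hP 2 3).mpr pathGraph4_adj_23
        · have := (hs 1 3).mp h; rw [hφ1, hφ3] at this
          exact pathGraph4_nadj_02 ((hP 0 2).mp this)
        · have := (hs 1 4).mp h; rw [hφ1, hφ4] at this
          exact pathGraph4_nadj_03 ((hP 0 3).mp this)
        · have := (hs 2 4).mp h; rw [hφ2, hφ4] at this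
          exact pathGraph4_nadj_13 ((hP 1 3).mp this))
    rw [hbe] at h1 h2 h3 h4 h5 h6
    exact hG.elim (p4emb G (φ p) (φ q) (φ r) (φ s)
      ((hm p q).mp h1) ((hm q r).mp h2) ((hm r s).mp h3)
      (fun h => h4 ((hm p r).mpr h)) (fun h => h5 ((hm p s).mpr h))
      (fun h => h6 ((hm q s).mpr h))
      (fun h => n1 (hφinj h)) (fun h => n2 (hφinj h)) (fun h => n3 (hφinj h)))

end Aux

/-- Cographs are closed under Seidel minors. -/
theorem isCograph_of_seidelMinor {W V : Type u} [Fintype W] [Fintype V]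
    (G : SimpleGraph V) (H : SimpleGraph W)
    (hG : IsCograph G) (hHG : SeidelMinor H G) : IsCograph H := by
  revert hG
  induction hHG with
  | iso e =>
    intro hG
    exact ⟨fun f => hG.elim (e.toEmbedding.comp f)⟩
  | seidel v h ih =>
    intro hG
    exact ih (seidelCompl_isCograph hG)
  | delete v h ih =>
    intro hG
    exact ih ⟨fun f => hG.elim ((SimpleGraph.Embedding.induce _).comp f)⟩
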